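/- If there exists a cyclic n-difference cover D = {d₁,…,d_k} of cardinality k, then μ(n) ≤ k − 1; that is, there exists a mediated digraph on n vertices whose maximum in-degree is at most k − 1. -/
import Mathlib


/-- The in-degree of vertex `z` in the digraph on `Fin n` with arc relation `A`
(`A x z` means `x` dominates `z`). -/
noncomputable def inDeg {n : ℕ} (A : Fin n → Fin n → Prop) (z : Fin n) : ℕ :=
  Nat.card {x : Fin n // A x z}

/-- The maximum in-degree `Δ⁻(D)` of the digraph on `Fin n` with arc relation `A`. -/
noncomputable def maxInDeg {n : ℕ} (A : Fin n → Fin n → Prop) : ℕ :=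
  Finset.univ.sup (inDeg A)

/-- A digraph is mediated if for every pair of distinct vertices `x, y` there is a
vertex `z` with `x, y ∈ N⁻[z]` (possibly `z = x` or `z = y`). -/
def Mediated {n : ℕ} (A : Fin n → Fin n → Prop) : Prop :=
  ∀ x y : Fin n, x ≠ y → ∃ z : Fin n, (x = z ∨ A x z) ∧ (y = z ∨ A y z)

/-- The `n`th mediation number `μ(n)`: the minimum of `Δ⁻(D)` over all mediated
digraphs (irreflexive arc relations) on `n` vertices. -/
noncomputable def mu (n : ℕ) : ℕ :=
  sInf { d : ℕ | ∃ A : Fin n → Fin n → Prop, Irreflexive A ∧ Mediated A ∧ maxInDeg A = d }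

/-- `f(n) = ⌈(√(4n−3) − 1)/2⌉`. -/
noncomputable def f (n : ℕ) : ℕ := ⌈(Real.sqrt (4 * (n : ℝ) - 3) - 1) / 2⌉₊

/-- If there exists a cyclic `n`-difference cover `D ⊆ ℤ_n` of cardinality `k`
(i.e. every element of `ℤ_n` is a difference of two elements of `D`), then
`μ(n) ≤ k − 1`; that is, there is a mediated digraph on `n` vertices whose
maximum in-degree is at most `k − 1`. -/
theorem mu_le_of_difference_cover (n k : ℕ) (hn : 0 < n) (D : Finset (ZMod n))
    (hcard : D.card = k)
    (hcover : ∀ z : ZMod n, ∃ a ∈ D, ∃ b ∈ D, a - b = z) :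
    mu n ≤ k - 1 ∧
    ∃ A : Fin n → Fin n → Prop,
      Irreflexive A ∧ Mediated A ∧ maxInDeg A ≤ k - 1 := by
  haveI : NeZero n := ⟨hn.ne'⟩
  -- pick an element of D and shift so 0 ∈ D'
  obtain ⟨d₀, hd₀, -⟩ := hcover 0
  set D' : Finset (ZMod n) := D.image (fun a => a - d₀) with hD'
  have hcard' : D'.card = k := by
    rw [hD', Finset.card_image_of_injective _ (sub_left_injective), hcard]
  have h0 : (0 : ZMod n) ∈ D' := by
    rw [hD', Finset.mem_image]; exact ⟨d₀, hd₀, sub_self d₀⟩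
  have hcover' : ∀ z : ZMod n, ∃ a ∈ D', ∃ b ∈ D', a - b = z := by
    intro z
    obtain ⟨a, ha, b, hb, hab⟩ := hcover z
    refine ⟨a - d₀, Finset.mem_image_of_mem _ ha, b - d₀,
      Finset.mem_image_of_mem _ hb, ?_⟩
    rw [← hab]; ring
  -- equivalence Fin n ≃ ZMod n
  let e : Fin n ≃ ZMod n := (Fintype.equivFinOfCardEq (ZMod.card n)).symm
  let A : Fin n → Fin n → Prop := fun x z => x ≠ z ∧ e x - e z ∈ D'
  have hirr : Irreflexive A := fun x h => h.1 rfl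
  have hmed : Mediated A := by
    intro x y hxy
    obtain ⟨a, ha, b, hb, hab⟩ := hcover' (e x - e y)
    refine ⟨e.symm (e x - a), ?_, ?_⟩
    · by_cases h : x = e.symm (e x - a)
      · exact Or.inl h
      · refine Or.inr ⟨h, ?_⟩
        rw [Equiv.apply_symm_apply]
        simpa using ha
    · by_cases h : y = e.symm (e x - a)
      · exact Or.inl h
      · refine Or.inr ⟨h, ?_⟩
        rw [Equiv.apply_symm_apply]
        have : e x - a = e y - b := by
          linear_combination -hab
        rw [this]
        simpa using hb
  have hdeg : ∀ z : Fin n, inDeg A z ≤ k - 1 := by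
    intro z
    have hinj : Function.Injective
        (fun x : {x : Fin n // A x z} =>
          (⟨e x.1 - e z, by
            refine Finset.mem_erase.2 ⟨?_, x.2.2⟩
            intro h
            exact x.2.1 (e.injective (by linear_combination h))⟩ :
            {d : ZMod n // d ∈ D'.erase 0})) := by
      rintro ⟨x, hx⟩ ⟨x', hx'⟩ h
      simp only [Subtype.mk.injEq] at h
      exact Subtype.ext (e.injective (by linear_combination h))
    have h1 : inDeg A z ≤ Nat.card {d : ZMod n // d ∈ D'.erase 0} :=
      Nat.card_le_card_of_injective _ hinj
    have h2 : Nat.card {d : ZMod n // d ∈ D'.erase 0} = (D'.erase 0).card := by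
      rw [Nat.card_eq_fintype_card]
      convert Fintype.card_coe (D'.erase 0) using 2
    have h3 : (D'.erase 0).card = k - 1 := by
      rw [Finset.card_erase_of_mem h0, hcard']
    omega
  have hmax : maxInDeg A ≤ k - 1 := Finset.sup_le fun z _ => hdeg z
  refine ⟨le_trans (Nat.sInf_le ⟨A, hirr, hmed, rfl⟩) hmax, A, hirr, hmed, hmax⟩
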